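/- In any triangle with sides a, b, c and medians m_a, m_b, m_c to those sides, we have a·m_a + b·m_b + c·m_c ≤ √(bc)·m_a + √(ac)·m_b + √(ab)·m_c. -/

import Mathlib

lemma pair_aux (u v : ℝ) (P Q R : ℝ) (hu : 0 < u) (hv : 0 < v)
    (hR : 0 ≤ R) (h1 : Q ^ 2 - P ^ 2 = 3 * (u ^ 4 - v ^ 4))
    (h2 : R ≤ u ^ 2 + v ^ 2) (h3 : P + Q ≤ 3 * (u ^ 2 + v ^ 2))
    (hPQ : 0 < P + Q) :
    R * (u - v) ^ 2 ≤ (u ^ 2 - v ^ 2) * (Q - P) := by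
  have huv : (0:ℝ) < u ^ 2 + v ^ 2 := by positivity
  have h4 : R * (P + Q) ≤ 3 * (u ^ 2 + v ^ 2) ^ 2 := by
    calc R * (P + Q) ≤ (u ^ 2 + v ^ 2) * (P + Q) :=
          mul_le_mul_of_nonneg_right h2 hPQ.le
      _ ≤ (u ^ 2 + v ^ 2) * (3 * (u ^ 2 + v ^ 2)) :=
          mul_le_mul_of_nonneg_left h3 huv.le
      _ = 3 * (u ^ 2 + v ^ 2) ^ 2 := by ring
  have h5 : (u - v) ^ 2 * (u ^ 2 + v ^ 2) ≤ (u ^ 2 - v ^ 2) ^ 2 := by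
    nlinarith [mul_nonneg (sq_nonneg (u - v)) (mul_pos hu hv).le]
  have key : R * (u - v) ^ 2 * (P + Q) ≤ (u ^ 2 - v ^ 2) * (Q - P) * (P + Q) := by
    have e1 : (u ^ 2 - v ^ 2) * (Q - P) * (P + Q) =
        3 * ((u ^ 2 - v ^ 2) ^ 2 * (u ^ 2 + v ^ 2)) := by
      linear_combination (u ^ 2 - v ^ 2) * h1
    rw [e1]
    calc R * (u - v) ^ 2 * (P + Q) = (u - v) ^ 2 * (R * (P + Q)) := by ring
      _ ≤ (u - v) ^ 2 * (3 * (u ^ 2 + v ^ 2) ^ 2) :=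
          mul_le_mul_of_nonneg_left h4 (sq_nonneg _)
      _ = 3 * (u ^ 2 + v ^ 2) * ((u - v) ^ 2 * (u ^ 2 + v ^ 2)) := by ring
      _ ≤ 3 * (u ^ 2 + v ^ 2) * (u ^ 2 - v ^ 2) ^ 2 :=
          mul_le_mul_of_nonneg_left h5 (by positivity)
      _ = 3 * ((u ^ 2 - v ^ 2) ^ 2 * (u ^ 2 + v ^ 2)) := by ring
  exact (mul_le_mul_iff_of_pos_right hPQ).mp key

set_option maxHeartbeats 1000000 in
theorem stmt4 (a b c : ℝ) (ha : 0 < a) (hb : 0 < b) (hc : 0 < c)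
    (hab : a < b + c) (hbc : b < a + c) (hca : c < a + b) :
    a * ((1 / 2) * Real.sqrt (2 * b ^ 2 + 2 * c ^ 2 - a ^ 2)) +
      b * ((1 / 2) * Real.sqrt (2 * a ^ 2 + 2 * c ^ 2 - b ^ 2)) +
      c * ((1 / 2) * Real.sqrt (2 * a ^ 2 + 2 * b ^ 2 - c ^ 2)) ≤
    Real.sqrt (b * c) * ((1 / 2) * Real.sqrt (2 * b ^ 2 + 2 * c ^ 2 - a ^ 2)) +
      Real.sqrt (a * c) * ((1 / 2) * Real.sqrt (2 * a ^ 2 + 2 * c ^ 2 - b ^ 2)) +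
      Real.sqrt (a * b) * ((1 / 2) * Real.sqrt (2 * a ^ 2 + 2 * b ^ 2 - c ^ 2)) := by
  set u := Real.sqrt a with hu_def
  set v := Real.sqrt b with hv_def
  set w := Real.sqrt c with hw_def
  have hu : 0 < u := Real.sqrt_pos.mpr ha
  have hv : 0 < v := Real.sqrt_pos.mpr hb
  have hw : 0 < w := Real.sqrt_pos.mpr hc
  have hu2 : u ^ 2 = a := Real.sq_sqrt ha.le
  have hv2 : v ^ 2 = b := Real.sq_sqrt hb.le
  have hw2 : w ^ 2 = c := Real.sq_sqrt hc.le
  have hXa : (0:ℝ) < 2 * b ^ 2 + 2 * c ^ 2 - a ^ 2 := by nlinarith [sq_nonneg (b - c)]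
  have hXb : (0:ℝ) < 2 * a ^ 2 + 2 * c ^ 2 - b ^ 2 := by nlinarith [sq_nonneg (a - c)]
  have hXc : (0:ℝ) < 2 * a ^ 2 + 2 * b ^ 2 - c ^ 2 := by nlinarith [sq_nonneg (a - b)]
  set P := Real.sqrt (2 * b ^ 2 + 2 * c ^ 2 - a ^ 2) with hP_def
  set Q := Real.sqrt (2 * a ^ 2 + 2 * c ^ 2 - b ^ 2) with hQ_def
  set R := Real.sqrt (2 * a ^ 2 + 2 * b ^ 2 - c ^ 2) with hR_def
  have hPpos : 0 < P := Real.sqrt_pos.mpr hXa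
  have hQpos : 0 < Q := Real.sqrt_pos.mpr hXb
  have hRpos : 0 < R := Real.sqrt_pos.mpr hXc
  have hP2 : P ^ 2 = 2 * b ^ 2 + 2 * c ^ 2 - a ^ 2 := Real.sq_sqrt hXa.le
  have hQ2 : Q ^ 2 = 2 * a ^ 2 + 2 * c ^ 2 - b ^ 2 := Real.sq_sqrt hXb.le
  have hR2 : R ^ 2 = 2 * a ^ 2 + 2 * b ^ 2 - c ^ 2 := Real.sq_sqrt hXc.le
  have hPle : P ≤ b + c := by
    rw [hP_def, show b + c = Real.sqrt ((b + c) ^ 2) from (Real.sqrt_sq (by linarith)).symm]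
    exact Real.sqrt_le_sqrt (by nlinarith)
  have hQle : Q ≤ a + c := by
    rw [hQ_def, show a + c = Real.sqrt ((a + c) ^ 2) from (Real.sqrt_sq (by linarith)).symm]
    exact Real.sqrt_le_sqrt (by nlinarith)
  have hRle : R ≤ a + b := by
    rw [hR_def, show a + b = Real.sqrt ((a + b) ^ 2) from (Real.sqrt_sq (by linarith)).symm]
    exact Real.sqrt_le_sqrt (by nlinarith)
  have hbc : Real.sqrt (b * c) = v * w := Real.sqrt_mul hb.le c
  have hac : Real.sqrt (a * c) = u * w := Real.sqrt_mul ha.le c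
  have hab' : Real.sqrt (a * b) = u * v := Real.sqrt_mul ha.le b
  have l1 : R * (u - v) ^ 2 ≤ (u ^ 2 - v ^ 2) * (Q - P) := by
    apply pair_aux u v P Q R hu hv hRpos.le
    · rw [hP2, hQ2, ← hu2, ← hv2]; ring
    · rw [hu2, hv2]; linarith
    · rw [hu2, hv2]; linarith
    · linarith
  have l2 : P * (v - w) ^ 2 ≤ (v ^ 2 - w ^ 2) * (R - Q) := by
    apply pair_aux v w Q R P hv hw hPpos.le
    · rw [hQ2, hR2, ← hv2, ← hw2]; ring
    · rw [hv2, hw2]; linarith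
    · rw [hv2, hw2]; linarith
    · linarith
  have l3 : Q * (u - w) ^ 2 ≤ (u ^ 2 - w ^ 2) * (R - P) := by
    apply pair_aux u w P R Q hu hw hQpos.le
    · rw [hP2, hR2, ← hu2, ← hw2]; ring
    · rw [hu2, hw2]; linarith
    · rw [hu2, hw2]; linarith
    · linarith
  rw [hbc, hac, hab', ← hu2, ← hv2, ← hw2]
  linarith [l1, l2, l3]
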